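/- Let j ∈ ℕ and m ∈ ℝ. There exists a constant C > 0 such that for all u ∈ C^{j+2}(ℝ^N, ℂ), sup_{|β|=j+1} ‖⟨x⟩^m D^β u‖_{L^∞} ≤ C ( sup_{|β|=j} ‖⟨x⟩^m D^β u‖_{L^∞} + sup_{|β|=j+2} ‖⟨x⟩^m D^β u‖_{L^∞} ). -/

import Mathlib

open MeasureTheory Complex
open scoped BigOperators ENNReal NNReal SchwartzMap

noncomputable def jb {N : ℕ} (x : EuclideanSpace ℝ (Fin N)) : ℝ :=
  Real.sqrt (1 + ‖x‖ ^ 2)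

noncomputable def Dk {N : ℕ} {F : Type*} [NormedAddCommGroup F] [NormedSpace ℝ F]
    (k : ℕ) (f : EuclideanSpace ℝ (Fin N) → F) (d : Fin k → Fin N)
    (x : EuclideanSpace ℝ (Fin N)) : F :=
  iteratedFDeriv ℝ k f x (fun i => EuclideanSpace.single (d i) 1)

noncomputable def lap {N : ℕ} {F : Type*} [NormedAddCommGroup F] [NormedSpace ℝ F]
    (f : EuclideanSpace ℝ (Fin N) → F) (x : EuclideanSpace ℝ (Fin N)) : F :=
  ∑ i : Fin N, iteratedFDeriv ℝ 2 f x (fun _ => EuclideanSpace.single i 1)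

noncomputable def gradNorm {N : ℕ} (f : EuclideanSpace ℝ (Fin N) → ℂ)
    (x : EuclideanSpace ℝ (Fin N)) : ℝ :=
  Real.sqrt (∑ i : Fin N, ‖fderiv ℝ f x (EuclideanSpace.single i 1)‖ ^ 2)

section Aux

variable {N : ℕ}

lemma jb_one_le (x : EuclideanSpace ℝ (Fin N)) : 1 ≤ jb x := by
  rw [jb]
  calc (1:ℝ) = Real.sqrt 1 := Real.sqrt_one.symm
    _ ≤ Real.sqrt (1 + ‖x‖ ^ 2) := Real.sqrt_le_sqrt (by nlinarith [sq_nonneg ‖x‖])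

lemma jb_pos (x : EuclideanSpace ℝ (Fin N)) : 0 < jb x :=
  lt_of_lt_of_le one_pos (jb_one_le x)

lemma jb_le_jb (x y : EuclideanSpace ℝ (Fin N)) (h : ‖y - x‖ ≤ 1) :
    jb x ≤ Real.sqrt 3 * jb y := by
  rw [jb, jb, ← Real.sqrt_mul (by norm_num : (0:ℝ) ≤ 3)]
  apply Real.sqrt_le_sqrt
  have hx : ‖x‖ ≤ ‖y‖ + 1 := by
    have h1 : ‖x‖ - ‖y‖ ≤ ‖x - y‖ := norm_sub_norm_le x y
    rw [norm_sub_rev] at h1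
    linarith
  nlinarith [mul_self_le_mul_self (norm_nonneg x) hx, sq_nonneg (‖y‖ - 1), norm_nonneg x, norm_nonneg y]

lemma weight_comp (m : ℝ) (x y : EuclideanSpace ℝ (Fin N)) (h : ‖y - x‖ ≤ 1) :
    jb x ^ m ≤ Real.sqrt 3 ^ |m| * jb y ^ m := by
  have h3 : (0:ℝ) < Real.sqrt 3 := by positivity
  rcases le_or_gt 0 m with hm | hm
  · rw [_root_.abs_of_nonneg hm]
    calc jb x ^ m ≤ (Real.sqrt 3 * jb y) ^ m :=
          Real.rpow_le_rpow (jb_pos x).le (jb_le_jb x y h) hm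
      _ = Real.sqrt 3 ^ m * jb y ^ m := Real.mul_rpow h3.le (jb_pos y).le
  · rw [_root_.abs_of_neg hm]
    have h1 : jb y ≤ Real.sqrt 3 * jb x := by
      apply jb_le_jb
      rwa [norm_sub_rev]
    have h2 : (Real.sqrt 3 * jb x) ^ m ≤ jb y ^ m :=
      Real.rpow_le_rpow_of_nonpos (jb_pos y) h1 hm.le
    rw [Real.mul_rpow h3.le (jb_pos x).le] at h2
    have h4 : (0:ℝ) < Real.sqrt 3 ^ (-m) := Real.rpow_pos_of_pos h3 _
    calc jb x ^ m = Real.sqrt 3 ^ (-m) * (Real.sqrt 3 ^ m * jb x ^ m) := by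
          rw [← mul_assoc, ← Real.rpow_add h3]
          simp
      _ ≤ Real.sqrt 3 ^ (-m) * jb y ^ m := mul_le_mul_of_nonneg_left h2 h4.le

lemma hasDerivAt_Dk (n : ℕ) {f : EuclideanSpace ℝ (Fin N) → ℂ}
    (hf : ContDiff ℝ (↑(n + 1)) f) (dd : Fin n → Fin N) (i : Fin N)
    (x : EuclideanSpace ℝ (Fin N)) (t : ℝ) :
    HasDerivAt (fun s : ℝ => Dk n f dd (x + s • EuclideanSpace.single i (1:ℝ)))
      (Dk (n + 1) f (Fin.cons i dd) (x + t • EuclideanSpace.single i (1:ℝ))) t := by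
  set E : EuclideanSpace ℝ (Fin N) := EuclideanSpace.single i (1:ℝ) with hE
  have hφ : HasDerivAt (fun s : ℝ => x + s • E) E t := by
    simpa using ((hasDerivAt_id t).smul_const E).const_add x
  have hF : ContDiff ℝ 1 (iteratedFDeriv ℝ n f) := by
    apply hf.iteratedFDeriv_right
    exact_mod_cast by omega
  have hFd : HasFDerivAt (iteratedFDeriv ℝ n f)
      (fderiv ℝ (iteratedFDeriv ℝ n f) (x + t • E)) (x + t • E) :=
    (hF.differentiable one_ne_zero _).hasFDerivAt
  have hcomp := hFd.comp_hasDerivAt t hφ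
  have hL := (ContinuousMultilinearMap.apply ℝ
      (fun _ : Fin n => EuclideanSpace ℝ (Fin N)) ℂ
      (fun k => EuclideanSpace.single (dd k) 1)).hasFDerivAt.comp_hasDerivAt t hcomp
  convert hL using 1
  · rfl
  · rfl
  · unfold Dk
    rw [iteratedFDeriv_succ_apply_left]
    rfl

end Aux

/-- Weighted L^∞ interpolation inequality for derivatives of order j+1. -/
theorem stmt5 (N : ℕ) (hN : 0 < N) (j : ℕ) (m : ℝ) :
    ∃ C : ℝ≥0∞, 0 < C ∧ C < ⊤ ∧
      ∀ u : EuclideanSpace ℝ (Fin N) → ℂ, ContDiff ℝ (j + 2) u →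
        (⨆ d : Fin (j + 1) → Fin N, ⨆ x, ENNReal.ofReal (jb x ^ m) * ‖Dk (j + 1) u d x‖₊) ≤
          C * ((⨆ d : Fin j → Fin N, ⨆ x, ENNReal.ofReal (jb x ^ m) * ‖Dk j u d x‖₊)
            + ⨆ d : Fin (j + 2) → Fin N, ⨆ x, ENNReal.ofReal (jb x ^ m) * ‖Dk (j + 2) u d x‖₊) := by
  set s3 : ℝ := Real.sqrt 3 ^ |m| with hs3
  have hs3pos : (0:ℝ) < s3 := Real.rpow_pos_of_pos (by positivity) _
  refine ⟨ENNReal.ofReal (2 * s3), ENNReal.ofReal_pos.mpr (by positivity),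
    ENNReal.ofReal_lt_top, ?_⟩
  intro u hu
  set A := (⨆ d : Fin j → Fin N, ⨆ x, ENNReal.ofReal (jb x ^ m) * ‖Dk j u d x‖₊) with hA
  set B := (⨆ d : Fin (j+2) → Fin N, ⨆ x, ENNReal.ofReal (jb x ^ m) * ‖Dk (j+2) u d x‖₊) with hB
  by_cases htop : A = ⊤ ∨ B = ⊤
  · have hT : A + B = ⊤ := by rcases htop with h | h <;> simp [h]
    rw [hT, ENNReal.mul_top (by simp [hs3pos, (by positivity : (0:ℝ) < 2*s3)])]
    exact le_top
  push_neg at htop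
  obtain ⟨hA', hB'⟩ := htop
  set a := A.toReal with ha_def
  set b := B.toReal with hb_def
  have ha0 : 0 ≤ a := ENNReal.toReal_nonneg
  have hb0 : 0 ≤ b := ENNReal.toReal_nonneg
  have ha : ∀ (dd : Fin j → Fin N) (y : EuclideanSpace ℝ (Fin N)),
      jb y ^ m * ‖Dk j u dd y‖ ≤ a := by
    intro dd y
    have h1 : ENNReal.ofReal (jb y ^ m) * ‖Dk j u dd y‖₊ ≤ A :=
      le_iSup_of_le dd (le_iSup (fun x => ENNReal.ofReal (jb x ^ m) * ‖Dk j u dd x‖₊) y)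
    rw [← ((ofReal_norm _).trans (enorm_eq_nnnorm (_ : ℂ))),
      ← ENNReal.ofReal_mul (Real.rpow_pos_of_pos (jb_pos y) m).le] at h1
    exact (ENNReal.ofReal_le_iff_le_toReal hA').mp h1
  have hb : ∀ (dd : Fin (j+2) → Fin N) (y : EuclideanSpace ℝ (Fin N)),
      jb y ^ m * ‖Dk (j+2) u dd y‖ ≤ b := by
    intro dd y
    have h1 : ENNReal.ofReal (jb y ^ m) * ‖Dk (j+2) u dd y‖₊ ≤ B :=
      le_iSup_of_le dd (le_iSup (fun x => ENNReal.ofReal (jb x ^ m) * ‖Dk (j+2) u dd x‖₊) y)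
    rw [← ((ofReal_norm _).trans (enorm_eq_nnnorm (_ : ℂ))),
      ← ENNReal.ofReal_mul (Real.rpow_pos_of_pos (jb_pos y) m).le] at h1
    exact (ENNReal.ofReal_le_iff_le_toReal hB').mp h1
  refine iSup_le fun d => iSup_le fun x => ?_
  -- the real pointwise inequality
  have key : jb x ^ m * ‖Dk (j+1) u d x‖ ≤ 2 * s3 * (a + b) := by
    set i := d 0 with hi
    set dd := Fin.tail d with hdd
    set E : EuclideanSpace ℝ (Fin N) := EuclideanSpace.single i (1:ℝ) with hE
    set w := jb x ^ m with hw_def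
    have hwpos : 0 < w := Real.rpow_pos_of_pos (jb_pos x) m
    have hu1 : ContDiff ℝ (↑(j + 1)) u := hu.of_le (by exact_mod_cast by omega)
    have hu2 : ContDiff ℝ (↑(j + 1 + 1)) u := by
      apply hu.of_le
      exact_mod_cast by omega
    have hcons : Fin.cons i dd = d := Fin.cons_self_tail d
    have hg : ∀ t : ℝ, HasDerivAt (fun s : ℝ => Dk j u dd (x + s • E))
        (Dk (j+1) u d (x + t • E)) t := by
      intro t
      have := hasDerivAt_Dk j hu1 dd i x t
      rwa [hcons] at this
    have hg2 : ∀ t : ℝ, HasDerivAt (fun s : ℝ => Dk (j+1) u d (x + s • E))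
        (Dk (j+1+1) u (Fin.cons i d) (x + t • E)) t :=
      fun t => hasDerivAt_Dk (j+1) hu2 d i x t
    have hnear : ∀ t ∈ Set.Icc (0:ℝ) 1, w ≤ s3 * jb (x + t • E) ^ m := by
      intro t ht
      apply weight_comp
      rw [show x + t • E - x = t • E by abel, norm_smul, hE,
        EuclideanSpace.norm_single]
      simpa using abs_le.mpr ⟨by linarith [ht.1], ht.2⟩
    -- bounds on g and g''
    have hgbound : ∀ t ∈ Set.Icc (0:ℝ) 1, ‖Dk j u dd (x + t • E)‖ ≤ s3 * a / w := by
      intro t ht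
      rw [le_div_iff₀ hwpos]
      have h1 := ha dd (x + t • E)
      have h2 := hnear t ht
      have h3 : (0:ℝ) < jb (x + t • E) ^ m := Real.rpow_pos_of_pos (jb_pos _) m
      nlinarith [norm_nonneg (Dk j u dd (x + t • E))]
    have hg2bound : ∀ t ∈ Set.Icc (0:ℝ) 1,
        ‖Dk (j+1+1) u (Fin.cons i d) (x + t • E)‖ ≤ s3 * b / w := by
      intro t ht
      rw [le_div_iff₀ hwpos]
      have h1 := hb (Fin.cons i d) (x + t • E)
      have h2 := hnear t ht
      have h3 : (0:ℝ) < jb (x + t • E) ^ m := Real.rpow_pos_of_pos (jb_pos _) m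
      nlinarith [norm_nonneg (Dk (j+1+1) u (Fin.cons i d) (x + t • E))]
    have hBnn : (0:ℝ) ≤ s3 * b / w := by positivity
    -- step 1: increments of g'
    have step1 : ∀ t ∈ Set.Icc (0:ℝ) 1,
        ‖Dk (j+1) u d (x + t • E) - Dk (j+1) u d (x + (0:ℝ) • E)‖ ≤ s3 * b / w := by
      intro t ht
      have := (convex_Icc (0:ℝ) 1).norm_image_sub_le_of_norm_hasDerivWithin_le
        (f := fun s : ℝ => Dk (j+1) u d (x + s • E))
        (f' := fun s : ℝ => Dk (j+1+1) u (Fin.cons i d) (x + s • E))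
        (fun s hs => (hg2 s).hasDerivWithinAt) hg2bound
        (Set.left_mem_Icc.mpr zero_le_one) ht
      calc ‖Dk (j+1) u d (x + t • E) - Dk (j+1) u d (x + (0:ℝ) • E)‖
          ≤ s3 * b / w * ‖t - 0‖ := this
        _ ≤ s3 * b / w * 1 := by
            apply mul_le_mul_of_nonneg_left _ hBnn
            rw [sub_zero, Real.norm_eq_abs]
            exact abs_le.mpr ⟨by linarith [ht.1], ht.2⟩
        _ = s3 * b / w := mul_one _
    -- step 2: MVT for h s = g s - s • g' 0
    have hh : ∀ s : ℝ, HasDerivAt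
        (fun s : ℝ => Dk j u dd (x + s • E) - s • Dk (j+1) u d (x + (0:ℝ) • E))
        (Dk (j+1) u d (x + s • E) - Dk (j+1) u d (x + (0:ℝ) • E)) s := by
      intro s
      have h2 : HasDerivAt (fun s : ℝ => s • Dk (j+1) u d (x + (0:ℝ) • E))
          (Dk (j+1) u d (x + (0:ℝ) • E)) s := by
        simpa using (hasDerivAt_id s).smul_const (Dk (j+1) u d (x + (0:ℝ) • E))
      exact (hg s).sub h2
    have step2 := (convex_Icc (0:ℝ) 1).norm_image_sub_le_of_norm_hasDerivWithin_le
      (f := fun s : ℝ => Dk j u dd (x + s • E) - s • Dk (j+1) u d (x + (0:ℝ) • E))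
      (f' := fun s : ℝ => Dk (j+1) u d (x + s • E) - Dk (j+1) u d (x + (0:ℝ) • E))
      (fun s hs => (hh s).hasDerivWithinAt) step1
      (Set.left_mem_Icc.mpr zero_le_one) (Set.right_mem_Icc.mpr zero_le_one)
    simp only [one_smul, zero_smul, add_zero, sub_zero, norm_one, mul_one] at step2
    have t1 : ‖Dk j u dd (x + E)‖ ≤ s3 * a / w := by
      have h := hgbound 1 (Set.right_mem_Icc.mpr zero_le_one)
      rwa [one_smul] at h
    have t0 : ‖Dk j u dd x‖ ≤ s3 * a / w := by
      have h := hgbound 0 (Set.left_mem_Icc.mpr zero_le_one)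
      rwa [zero_smul, add_zero] at h
    have e1 : Dk (j+1) u d x =
        (Dk j u dd (x + E) - Dk j u dd x) -
        (Dk j u dd (x + E) - Dk (j+1) u d x - Dk j u dd x) := by abel
    have hnorm : ‖Dk (j+1) u d x‖ ≤ s3 * a / w + s3 * a / w + s3 * b / w := by
      rw [e1]
      have n1 := norm_sub_le (Dk j u dd (x + E) - Dk j u dd x)
        (Dk j u dd (x + E) - Dk (j+1) u d x - Dk j u dd x)
      have n2 := norm_sub_le (Dk j u dd (x + E)) (Dk j u dd x)
      linarith
    have := mul_le_mul_of_nonneg_left hnorm hwpos.le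
    calc w * ‖Dk (j+1) u d x‖ ≤ w * (s3 * a / w + s3 * a / w + s3 * b / w) := this
      _ = 2 * s3 * a + s3 * b := by field_simp; ring
      _ ≤ 2 * s3 * (a + b) := by nlinarith
  calc ENNReal.ofReal (jb x ^ m) * ‖Dk (j+1) u d x‖₊
      = ENNReal.ofReal (jb x ^ m * ‖Dk (j+1) u d x‖) := by
        rw [ENNReal.ofReal_mul (Real.rpow_pos_of_pos (jb_pos x) m).le,
          ((ofReal_norm _).trans (enorm_eq_nnnorm (_ : ℂ)))]
    _ ≤ ENNReal.ofReal (2 * s3 * (a + b)) := ENNReal.ofReal_le_ofReal key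
    _ = ENNReal.ofReal (2 * s3) * ENNReal.ofReal (a + b) := by
        rw [ENNReal.ofReal_mul (by positivity : (0:ℝ) ≤ 2 * s3)]
    _ ≤ ENNReal.ofReal (2 * s3) * (A + B) := by
        gcongr
        rw [ENNReal.ofReal_add ha0 hb0]
        exact add_le_add ENNReal.ofReal_toReal_le ENNReal.ofReal_toReal_le
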